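/- arXiv:2405.06364 — 2 statements merged into one kernel-verified Lean document; each statement's English description precedes it below -/
import Mathlib

section
/- Let C ⊆ ℝ^n be a nonempty closed convex set, let h_1, …, h_L : ℝ^n → ℝ be convex continuous functions, let ζ_1, …, ζ_L > 0 be weights, and let σ > 0. Suppose s* ∈ C and u_1, …, u_L ∈ ℝ^n satisfy: (i) Σ_{l=1}^L u_l = 0, and (ii) for every l, s* is a minimizer over C of the function v ↦ (1/2)‖v − (s* + u_l)‖² + σ² ζ_l h_l(v). Then s* is a global minimizer over C of the weighted sum h(s) = Σ_{l=1}^L ζ_l h_l(s); that is, for all v ∈ C, Σ_l ζ_l h_l(s*) ≤ Σ_l ζ_l h_l(v). -/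
/-- MACE (Theorem 1 of the paper): if `s*` together with forces `u_l` summing to zero
satisfies the equilibrium conditions (each `s*` is a proximal point of the shifted input),
then `s*` globally minimizes the weighted MAP cost over `C`. -/
theorem mace_consensus_is_map_minimizer
    {n L : ℕ} (C : Set (EuclideanSpace ℝ (Fin n)))
    (hCne : C.Nonempty) (hCclosed : IsClosed C) (hCconv : Convex ℝ C)
    (h : Fin L → EuclideanSpace ℝ (Fin n) → ℝ)
    (hconv : ∀ l, ConvexOn ℝ Set.univ (h l))
    (hcont : ∀ l, Continuous (h l))
    (ζ : Fin L → ℝ) (hζ : ∀ l, 0 < ζ l)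
    (σ : ℝ) (hσ : 0 < σ)
    (sstar : EuclideanSpace ℝ (Fin n)) (hs : sstar ∈ C)
    (u : Fin L → EuclideanSpace ℝ (Fin n))
    (hsum : ∑ l, u l = 0)
    (hmin : ∀ l, ∀ v ∈ C,
      (1/2) * ‖sstar - (sstar + u l)‖^2 + σ^2 * ζ l * h l sstar ≤
      (1/2) * ‖v - (sstar + u l)‖^2 + σ^2 * ζ l * h l v) :
    ∀ v ∈ C, ∑ l, ζ l * h l sstar ≤ ∑ l, ζ l * h l v := by
  intro v hv
  set w : EuclideanSpace ℝ (Fin n) := v - sstar with hw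
  set A : ℝ := σ^2 * ∑ l, ζ l * (h l sstar - h l v) with hA
  set B : ℝ := (L : ℝ) * ((1/2) * ‖w‖^2) with hB
  have hBnn : 0 ≤ B := by positivity
  have key : ∀ t : ℝ, 0 < t → t ≤ 1 → A ≤ t * B := by
    intro t ht ht1
    have hvt_mem : sstar + t • w ∈ C := by
      have := hCconv hs hv (by linarith : (0:ℝ) ≤ 1 - t) ht.le (by ring)
      have e : (1 - t) • sstar + t • v = sstar + t • w := by
        rw [hw]; module
      rwa [e] at this
    have perl : ∀ l, σ^2 * ζ l * (t * (h l sstar - h l v)) ≤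
        (1/2) * t^2 * ‖w‖^2 - t * (inner ℝ w (u l) : ℝ) := by
      intro l
      have hm := hmin l (sstar + t • w) hvt_mem
      have e1 : sstar - (sstar + u l) = -(u l) := by module
      have e2 : sstar + t • w - (sstar + u l) = t • w - u l := by module
      rw [e1, e2] at hm
      have hn1 : ‖-(u l)‖ = ‖u l‖ := norm_neg _
      have hn2 : ‖t • w - u l‖^2 = ‖t • w‖^2 - 2 * (inner ℝ (t • w) (u l) : ℝ) + ‖u l‖^2 :=
        norm_sub_sq_real _ _
      have hn3 : ‖t • w‖^2 = t^2 * ‖w‖^2 := by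
        rw [norm_smul, Real.norm_eq_abs, abs_of_pos ht]; ring
      have hn4 : (inner ℝ (t • w) (u l) : ℝ) = t * inner ℝ w (u l) := real_inner_smul_left _ _ _
      rw [hn1, hn2, hn3, hn4] at hm
      have hcv : h l (sstar + t • w) ≤ (1 - t) * h l sstar + t * h l v := by
        have := (hconv l).2 (Set.mem_univ sstar) (Set.mem_univ v)
          (by linarith : (0:ℝ) ≤ 1 - t) ht.le (by ring)
        have e : (1 - t) • sstar + t • v = sstar + t • w := by rw [hw]; module
        rwa [e] at this
      have hpos : 0 < σ^2 * ζ l := mul_pos (by positivity) (hζ l)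
      nlinarith [mul_le_mul_of_nonneg_left hcv hpos.le]
    have hsum' : ∑ l, (inner ℝ w (u l) : ℝ) = 0 := by
      rw [← inner_sum, hsum, inner_zero_right]
    have := Finset.sum_le_sum (s := Finset.univ) (fun l _ => perl l)
    have lhs_eq : ∑ l, σ^2 * ζ l * (t * (h l sstar - h l v)) = t * A := by
      rw [hA, Finset.mul_sum, Finset.mul_sum]
      apply Finset.sum_congr rfl
      intro l _; ring
    have rhs_eq : ∑ l : Fin L, ((1/2) * t^2 * ‖w‖^2 - t * (inner ℝ w (u l) : ℝ))
        = t * (t * B) := by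
      have e : ∑ x : Fin L, t * (inner ℝ w (u x) : ℝ) = t * ∑ x : Fin L, (inner ℝ w (u x) : ℝ) := by
        rw [Finset.mul_sum]
      rw [Finset.sum_sub_distrib, e, hsum', Finset.sum_const, Finset.card_univ,
        Fintype.card_fin, nsmul_eq_mul, hB]
      ring
    rw [lhs_eq, rhs_eq] at this
    exact (mul_le_mul_iff_right₀ ht).mp this
  -- conclude A ≤ 0
  have hA0 : A ≤ 0 := by
    by_contra hc
    push_neg at hc
    set t0 : ℝ := min 1 (A / (B + A)) with ht0
    have hBA : 0 < B + A := by linarith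
    have ht0pos : 0 < t0 := lt_min one_pos (div_pos hc hBA)
    have ht0le : t0 ≤ 1 := min_le_left _ _
    have hk := key t0 ht0pos ht0le
    have h1 : t0 ≤ A / (B + A) := min_le_right _ _
    have h2 : t0 * B ≤ (A / (B + A)) * B := mul_le_mul_of_nonneg_right h1 hBnn
    have h3 : (A / (B + A)) * B < A := by
      rw [div_mul_eq_mul_div, div_lt_iff₀ hBA]
      nlinarith
    linarith
  -- from A ≤ 0 deduce the goal
  have hσ2 : 0 < σ^2 := by positivity
  have hS : ∑ l, ζ l * (h l sstar - h l v) ≤ 0 := by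
    by_contra hc
    push_neg at hc
    have : 0 < A := by rw [hA]; exact mul_pos hσ2 hc
    linarith
  have : ∑ l, ζ l * h l sstar - ∑ l, ζ l * h l v
      = ∑ l, ζ l * (h l sstar - h l v) := by
    rw [← Finset.sum_sub_distrib]
    apply Finset.sum_congr rfl
    intro l _; ring
  linarith
end

section
/- Let V be a real vector space, let G : V → V be a linear map with G ∘ G = G, and let F : V → V be an arbitrary map. For S ∈ V, set Q = (2G − id)(S). Then F(S) = G(S) if and only if Q is a fixed point of the composition T = (2F − id) ∘ (2G − id), i.e. (2F − id)((2G − id)(Q)) = Q. Moreover, in that case S = (2G − id)(Q). -/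
/-- Equivalence between the consensus-equilibrium equation `F(S) = G(S)` and the
fixed-point equation for `T = (2F - I)(2G - I)` at `Q = (2G - I)(S)`, for a linear
idempotent `G` and an arbitrary map `F`; moreover `S` is recovered as `(2G - I)(Q)`. -/
theorem mace_fixed_point_equivalence
    {V : Type*} [AddCommGroup V] [Module ℝ V]
    (G : V →ₗ[ℝ] V) (hG : ∀ x, G (G x) = G x)
    (F : V → V) (S : V) :
    let Q := (2:ℝ) • G S - S
    (F S = G S ↔ (2:ℝ) • F ((2:ℝ) • G Q - Q) - ((2:ℝ) • G Q - Q) = Q) ∧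
    (F S = G S → S = (2:ℝ) • G Q - Q) := by
  intro Q
  have hGQ : G Q = G S := by
    simp only [Q, map_sub, map_smul, hG]
    module
  have hS : (2:ℝ) • G Q - Q = S := by
    rw [hGQ]; simp only [Q]; abel
  rw [hS]
  constructor
  · constructor
    · intro h
      rw [h]
    · intro h
      have : (2:ℝ) • F S = (2:ℝ) • G S := by
        have := h
        simp only [Q] at this
        have h2 : (2:ℝ) • F S - S = (2:ℝ) • G S - S := by linear_combination (norm := abel) this
        linear_combination (norm := abel) h2
      have h2 := congrArg (fun x => (2:ℝ)⁻¹ • x) this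
      simpa [smul_smul] using h2
  · intro _; rfl
end
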